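/- Let a, b ∈ ℚ with -4a³ - 27b² ≠ 0 and let θ₁, θ₂, θ₃ ∈ ℂ be the (necessarily distinct) roots of x³ + ax + b. Then for all t, a₀, a₁, a₂ ∈ ℚ, the three equations f₇ = 0, g₇ = 0, h₇ = 0 hold simultaneously if and only if for every j ∈ {1,2,3} one has (a₀ + a₁θⱼ + a₂θⱼ²)² = -(3θⱼ² + a)·(t² - (2/3)θⱼ·t - (2θⱼ² + a)/9). -/
import Mathlib


/-- Theorem 1.4 of the paper: the defining equations of `X⁷_E(8)` hold iff the
coefficient-comparison identity (with scaling factor `δⱼ = -(3θⱼ² + a)`) holds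
at each root of `x³ + ax + b`. -/
theorem stmt_3 (a b : ℚ) (hD : -4 * a ^ 3 - 27 * b ^ 2 ≠ 0)
    (θ₁ θ₂ θ₃ : ℂ)
    (hroots : ∀ x : ℂ, x ^ 3 + (a : ℂ) * x + (b : ℂ) = (x - θ₁) * (x - θ₂) * (x - θ₃))
    (t a₀ a₁ a₂ : ℚ) :
    (3 * t ^ 2 + a / 9 - a * a₂ ^ 2 + 2 * a₀ * a₂ + a₁ ^ 2 = 0 ∧
      4 / 3 * a * t + 2 / 3 * b - 2 * a * a₁ * a₂ - b * a₂ ^ 2 + 2 * a₀ * a₁ = 0 ∧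
      a * t ^ 2 + 2 * b * t - 1 / 9 * a ^ 2 - 2 * b * a₁ * a₂ + a₀ ^ 2 = 0) ↔
    ∀ θ ∈ ({θ₁, θ₂, θ₃} : Set ℂ),
      ((a₀ : ℂ) + (a₁ : ℂ) * θ + (a₂ : ℂ) * θ ^ 2) ^ 2 =
        -(3 * θ ^ 2 + (a : ℂ)) *
          ((t : ℂ) ^ 2 - 2 / 3 * θ * (t : ℂ) - (2 * θ ^ 2 + (a : ℂ)) / 9) := by
  have hs : θ₁ + θ₂ + θ₃ = 0 := by
    linear_combination (hroots 1 + hroots (-1) - 2 * hroots 0) / 2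
  have hp : θ₁ * θ₂ + θ₁ * θ₃ + θ₂ * θ₃ = (a : ℂ) := by
    linear_combination (hroots (-1) - hroots 1) / 2
  have hq : θ₁ * θ₂ * θ₃ = -(b : ℂ) := by
    linear_combination hroots 0
  have hc1 : θ₁ ^ 3 + (a : ℂ) * θ₁ + (b : ℂ) = 0 := by rw [hroots θ₁]; ring
  have hc2 : θ₂ ^ 3 + (a : ℂ) * θ₂ + (b : ℂ) = 0 := by rw [hroots θ₂]; ring
  have hc3 : θ₃ ^ 3 + (a : ℂ) * θ₃ + (b : ℂ) = 0 := by rw [hroots θ₃]; ring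
  have hθ3 : θ₃ = -θ₁ - θ₂ := by linear_combination hs
  have ha' : (a : ℂ) = -(θ₁ ^ 2 + θ₁ * θ₂ + θ₂ ^ 2) := by
    rw [hθ3] at hp; linear_combination -hp
  have hb' : (b : ℂ) = θ₁ * θ₂ * (θ₁ + θ₂) := by
    rw [hθ3] at hq; linear_combination hq
  have hdisc : ((θ₁ - θ₂) * (θ₁ - θ₃) * (θ₂ - θ₃)) ^ 2
      = -4 * (a : ℂ) ^ 3 - 27 * (b : ℂ) ^ 2 := by
    rw [hθ3, ha', hb']; ring
  have hDC : -4 * (a : ℂ) ^ 3 - 27 * (b : ℂ) ^ 2 ≠ 0 := by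
    exact_mod_cast hD
  have hprod : (θ₁ - θ₂) * (θ₁ - θ₃) * (θ₂ - θ₃) ≠ 0 := by
    intro h
    exact hDC (by rw [← hdisc, h]; ring)
  have h12 : θ₁ - θ₂ ≠ 0 := fun h => hprod (by rw [h]; ring)
  have h13 : θ₁ - θ₃ ≠ 0 := fun h => hprod (by rw [h]; ring)
  have h23 : θ₂ - θ₃ ≠ 0 := fun h => hprod (by rw [h]; ring)
  constructor
  · rintro ⟨hf, hg, hh⟩ θ hθ
    have hfC : 3 * (t : ℂ) ^ 2 + (a : ℂ) / 9 - (a : ℂ) * (a₂ : ℂ) ^ 2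
        + 2 * (a₀ : ℂ) * (a₂ : ℂ) + (a₁ : ℂ) ^ 2 = 0 := by
      have := congrArg (fun r : ℚ => (r : ℂ)) hf
      push_cast at this; linear_combination this
    have hgC : 4 / 3 * (a : ℂ) * (t : ℂ) + 2 / 3 * (b : ℂ) - 2 * (a : ℂ) * (a₁ : ℂ) * (a₂ : ℂ)
        - (b : ℂ) * (a₂ : ℂ) ^ 2 + 2 * (a₀ : ℂ) * (a₁ : ℂ) = 0 := by
      have := congrArg (fun r : ℚ => (r : ℂ)) hg
      push_cast at this; linear_combination this
    have hhC : (a : ℂ) * (t : ℂ) ^ 2 + 2 * (b : ℂ) * (t : ℂ) - 1 / 9 * (a : ℂ) ^ 2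
        - 2 * (b : ℂ) * (a₁ : ℂ) * (a₂ : ℂ) + (a₀ : ℂ) ^ 2 = 0 := by
      have := congrArg (fun r : ℚ => (r : ℂ)) hh
      push_cast at this; linear_combination this
    simp only [Set.mem_insert_iff, Set.mem_singleton_iff] at hθ
    rcases hθ with h | h | h <;> rw [h]
    · linear_combination θ₁ ^ 2 * hfC + θ₁ * hgC + hhC
        + (((a₂ : ℂ) ^ 2 - 2 / 3) * θ₁ + 2 * (a₁ : ℂ) * (a₂ : ℂ) - 2 * (t : ℂ)) * hc1
    · linear_combination θ₂ ^ 2 * hfC + θ₂ * hgC + hhC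
        + (((a₂ : ℂ) ^ 2 - 2 / 3) * θ₂ + 2 * (a₁ : ℂ) * (a₂ : ℂ) - 2 * (t : ℂ)) * hc2
    · linear_combination θ₃ ^ 2 * hfC + θ₃ * hgC + hhC
        + (((a₂ : ℂ) ^ 2 - 2 / 3) * θ₃ + 2 * (a₁ : ℂ) * (a₂ : ℂ) - 2 * (t : ℂ)) * hc3
  · intro H
    set F : ℂ := 3 * (t : ℂ) ^ 2 + (a : ℂ) / 9 - (a : ℂ) * (a₂ : ℂ) ^ 2
        + 2 * (a₀ : ℂ) * (a₂ : ℂ) + (a₁ : ℂ) ^ 2 with hFdef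
    set G : ℂ := 4 / 3 * (a : ℂ) * (t : ℂ) + 2 / 3 * (b : ℂ) - 2 * (a : ℂ) * (a₁ : ℂ) * (a₂ : ℂ)
        - (b : ℂ) * (a₂ : ℂ) ^ 2 + 2 * (a₀ : ℂ) * (a₁ : ℂ) with hGdef
    set Hc : ℂ := (a : ℂ) * (t : ℂ) ^ 2 + 2 * (b : ℂ) * (t : ℂ) - 1 / 9 * (a : ℂ) ^ 2
        - 2 * (b : ℂ) * (a₁ : ℂ) * (a₂ : ℂ) + (a₀ : ℂ) ^ 2 with hHdef
    have H1 := H θ₁ (by simp)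
    have H2 := H θ₂ (by simp)
    have H3 := H θ₃ (by simp)
    have e1 : F * θ₁ ^ 2 + G * θ₁ + Hc = 0 := by
      rw [hFdef, hGdef, hHdef]
      linear_combination H1
        - (((a₂ : ℂ) ^ 2 - 2 / 3) * θ₁ + 2 * (a₁ : ℂ) * (a₂ : ℂ) - 2 * (t : ℂ)) * hc1
    have e2 : F * θ₂ ^ 2 + G * θ₂ + Hc = 0 := by
      rw [hFdef, hGdef, hHdef]
      linear_combination H2
        - (((a₂ : ℂ) ^ 2 - 2 / 3) * θ₂ + 2 * (a₁ : ℂ) * (a₂ : ℂ) - 2 * (t : ℂ)) * hc2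
    have e3 : F * θ₃ ^ 2 + G * θ₃ + Hc = 0 := by
      rw [hFdef, hGdef, hHdef]
      linear_combination H3
        - (((a₂ : ℂ) ^ 2 - 2 / 3) * θ₃ + 2 * (a₁ : ℂ) * (a₂ : ℂ) - 2 * (t : ℂ)) * hc3
    have k1 : F * (θ₁ + θ₂) + G = 0 := by
      apply mul_left_cancel₀ h12
      linear_combination e1 - e2
    have k2 : F * (θ₁ + θ₃) + G = 0 := by
      apply mul_left_cancel₀ h13
      linear_combination e1 - e3
    have hF : F = 0 := by
      apply mul_left_cancel₀ h23
      linear_combination k1 - k2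
    have hG : G = 0 := by linear_combination k1 - (θ₁ + θ₂) * hF
    have hH : Hc = 0 := by linear_combination e1 - θ₁ ^ 2 * hF - θ₁ * hG
    rw [hFdef] at hF
    rw [hGdef] at hG
    rw [hHdef] at hH
    refine ⟨?_, ?_, ?_⟩
    · have h' : ((3 * t ^ 2 + a / 9 - a * a₂ ^ 2 + 2 * a₀ * a₂ + a₁ ^ 2 : ℚ) : ℂ) = 0 := by
        push_cast; linear_combination hF
      exact_mod_cast h'
    · have h' : ((4 / 3 * a * t + 2 / 3 * b - 2 * a * a₁ * a₂ - b * a₂ ^ 2 + 2 * a₀ * a₁ : ℚ) : ℂ) = 0 := by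
        push_cast; linear_combination hG
      exact_mod_cast h'
    · have h' : ((a * t ^ 2 + 2 * b * t - 1 / 9 * a ^ 2 - 2 * b * a₁ * a₂ + a₀ ^ 2 : ℚ) : ℂ) = 0 := by
        push_cast; linear_combination hH
      exact_mod_cast h'
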